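/- Let C → Q (with map φ) be a Girard couple with cyclic dualizing element d. Then φ is self-adjoint: for all c₁, c₂ ∈ C, φ(c₁) ≤ c₂^⊥ if and only if c₁ ≤ φ(c₂)^⊥, where for a ∈ Q, a^⊥ = ⋁{c ∈ C : a·c ≤ d} and for c ∈ C, c^⊥ = ⋁{a ∈ Q : a·c ≤ d}. -/

import Mathlib

/-- A quantale: a complete lattice with an associative multiplication
distributing over arbitrary joins in both variables. -/
class Quantale' (α : Type*) extends CompleteLattice α, Mul α where
  mul_assoc : ∀ a b c : α, a * b * c = a * (b * c)
  mul_sSup : ∀ (a : α) (s : Set α), a * sSup s = ⨆ b ∈ s, a * b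
  sSup_mul : ∀ (s : Set α) (a : α), sSup s * a = ⨆ b ∈ s, b * a

/-- A couple of quantales: a quantale `Q`, a quantale `C` which is also a
`Q`-bimodule, and a coupling map `φ : C → Q` which is a join-preserving
`Q`-bimodule homomorphism satisfying `φ(c₁)·c₂ = c₁·φ(c₂) = c₁·c₂`. -/
structure Couple (C Q : Type*) [Quantale' C] [Quantale' Q] where
  φ : C → Q
  /-- the left action of `Q` on `C` -/
  act : Q → C → C
  /-- the right action of `Q` on `C` -/
  actr : C → Q → C
  act_sSup : ∀ (a : Q) (s : Set C), act a (sSup s) = ⨆ c ∈ s, act a c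
  sSup_act : ∀ (s : Set Q) (c : C), act (sSup s) c = ⨆ a ∈ s, act a c
  actr_sSup : ∀ (c : C) (s : Set Q), actr c (sSup s) = ⨆ a ∈ s, actr c a
  sSup_actr : ∀ (s : Set C) (a : Q), actr (sSup s) a = ⨆ c ∈ s, actr c a
  act_mul : ∀ (a b : Q) (c : C), act (a * b) c = act a (act b c)
  actr_mul : ∀ (c : C) (a b : Q), actr c (a * b) = actr (actr c a) b
  act_actr : ∀ (a : Q) (c : C) (b : Q), actr (act a c) b = act a (actr c b)
  φ_sSup : ∀ s : Set C, φ (sSup s) = ⨆ c ∈ s, φ c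
  φ_act : ∀ (a : Q) (c : C), φ (act a c) = a * φ c
  φ_actr : ∀ (c : C) (a : Q), φ (actr c a) = φ c * a
  couple_left : ∀ c₁ c₂ : C, act (φ c₁) c₂ = c₁ * c₂
  couple_right : ∀ c₁ c₂ : C, actr c₁ (φ c₂) = c₁ * c₂

/-- A Girard couple: a couple together with a cyclic dualizing element `d ∈ C`. -/
structure GirardCouple (C Q : Type*) [Quantale' C] [Quantale' Q] extends Couple C Q where
  d : C
  cyclic : ∀ (a : Q) (c : C), act a c ≤ d ↔ actr c a ≤ d
  /-- `d ⧸ (a → d) = a` for `a ∈ Q` -/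
  dualizing_Q₁ : ∀ a : Q, sSup {b : Q | act b (sSup {c : C | actr c a ≤ d}) ≤ d} = a
  /-- `(d ⧸ a) → d = a` for `a ∈ Q` -/
  dualizing_Q₂ : ∀ a : Q, sSup {b : Q | actr (sSup {c : C | act a c ≤ d}) b ≤ d} = a
  /-- `d ⧸ (c → d) = c` for `c ∈ C` -/
  dualizing_C₁ : ∀ c : C, sSup {c' : C | act (sSup {a : Q | actr c a ≤ d}) c' ≤ d} = c
  /-- `(d ⧸ c) → d = c` for `c ∈ C` -/
  dualizing_C₂ : ∀ c : C, sSup {c' : C | actr c' (sSup {a : Q | act a c ≤ d}) ≤ d} = c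

/-- The coupling map of a Girard couple is self-adjoint. -/
theorem stmt6 {C Q : Type*} [Quantale' C] [Quantale' Q] (gc : GirardCouple C Q)
    (c₁ c₂ : C) :
    gc.φ c₁ ≤ sSup {a : Q | gc.act a c₂ ≤ gc.d} ↔
    c₁ ≤ sSup {c : C | gc.act (gc.φ c₂) c ≤ gc.d} := by
  have monoL : ∀ (a b : Q) (c : C), a ≤ b → gc.act a c ≤ gc.act b c := by
    intro a b c hab
    have h : gc.act (sSup {a, b}) c = ⨆ x ∈ ({a, b} : Set Q), gc.act x c :=
      gc.sSup_act {a, b} c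
    have hs : sSup ({a, b} : Set Q) = b := by
      simp [sSup_pair, sup_eq_right.mpr hab]
    rw [hs] at h
    rw [h]
    exact le_iSup₂_of_le a (by simp) le_rfl
  have monoR : ∀ (a : Q) (c c' : C), c ≤ c' → gc.act a c ≤ gc.act a c' := by
    intro a c c' hcc
    have h : gc.act a (sSup {c, c'}) = ⨆ x ∈ ({c, c'} : Set C), gc.act a x :=
      gc.act_sSup a {c, c'}
    have hs : sSup ({c, c'} : Set C) = c' := by
      simp [sSup_pair, sup_eq_right.mpr hcc]
    rw [hs] at h
    rw [h]
    exact le_iSup₂_of_le c (by simp) le_rfl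
  have keyQ : ∀ (a : Q) (c : C),
      a ≤ sSup {b : Q | gc.act b c ≤ gc.d} ↔ gc.act a c ≤ gc.d := by
    intro a c
    constructor
    · intro h
      calc gc.act a c ≤ gc.act (sSup {b : Q | gc.act b c ≤ gc.d}) c :=
            monoL _ _ _ h
        _ = ⨆ b ∈ {b : Q | gc.act b c ≤ gc.d}, gc.act b c := gc.sSup_act _ c
        _ ≤ gc.d := iSup₂_le fun _ hb => hb
    · intro h; exact le_sSup h
  have keyC : ∀ (a : Q) (c : C),
      c ≤ sSup {c' : C | gc.act a c' ≤ gc.d} ↔ gc.act a c ≤ gc.d := by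
    intro a c
    constructor
    · intro h
      calc gc.act a c ≤ gc.act a (sSup {c' : C | gc.act a c' ≤ gc.d}) :=
            monoR _ _ _ h
        _ = ⨆ c' ∈ {c' : C | gc.act a c' ≤ gc.d}, gc.act a c' := gc.act_sSup a _
        _ ≤ gc.d := iSup₂_le fun _ hc => hc
    · intro h; exact le_sSup h
  rw [keyQ, keyC, gc.cyclic, gc.toCouple.couple_right, ← gc.toCouple.couple_left]
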